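/- Theorem (global optimality of stationary points under QI sparsity): let S ∈ {0,1}^{mN×pN} be a binary matrix such that Sparse(S) is quadratically invariant with respect to G and K·G is nilpotent for every K ∈ Sparse(S). If K* ∈ Sparse(S) is a stationary point of J, i.e. ∇J(K*) ∈ Sparse(S)^⊥, then K* is a global minimizer: J(K*) ≤ J(K) for all K ∈ Sparse(S). -/

import Mathlib

open Matrix

noncomputable section

/-- Squared Frobenius norm of a real matrix. -/
def frobSq {a b : Type*} [Fintype a] [Fintype b] (A : Matrix a b ℝ) : ℝ :=
  ∑ i, ∑ j, (A i j) ^ 2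

/-- Squared Euclidean norm of a real vector. -/
def vecSq {a : Type*} [Fintype a] (v : a → ℝ) : ℝ :=
  ∑ i, (v i) ^ 2

/-- The finite-horizon LQG cost `J(K)` of the paper, written in terms of the
square roots `Msq = M^{1/2}`, `Swsq = Σw^{1/2}`, `Rsq = R^{1/2}`, `Svsq = Σv^{1/2}`. -/
def Jcost {nn mm pp : ℕ}
    (P11 : Matrix (Fin nn) (Fin nn) ℝ) (P12 : Matrix (Fin nn) (Fin mm) ℝ)
    (C : Matrix (Fin pp) (Fin nn) ℝ)
    (Msq Swsq : Matrix (Fin nn) (Fin nn) ℝ)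
    (Rsq : Matrix (Fin mm) (Fin mm) ℝ) (Svsq : Matrix (Fin pp) (Fin pp) ℝ)
    (μ : Fin nn → ℝ) (K : Matrix (Fin mm) (Fin pp) ℝ) : ℝ :=
  frobSq (Msq * (1 - P12 * K * C)⁻¹ * P11 * Swsq)
  + frobSq (Msq * P12 * K * (1 - C * P12 * K)⁻¹ * Svsq)
  + frobSq (Rsq * K * (1 - C * P12 * K)⁻¹ * C * P11 * Swsq)
  + frobSq (Rsq * K * (1 - C * P12 * K)⁻¹ * Svsq)
  + vecSq ((Msq * (1 - P12 * K * C)⁻¹ * P11).mulVec μ)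
  + vecSq ((Rsq * K * (1 - C * P12 * K)⁻¹ * C * P11).mulVec μ)

/-- The disturbance-feedback cost `J̃(Q)` of the paper, written in terms of the
square roots `Msq = M^{1/2}`, `Swsq = Σw^{1/2}`, `Rsq = R^{1/2}`, `Svsq = Σv^{1/2}`. -/
def Jtilde {nn mm pp : ℕ}
    (P11 : Matrix (Fin nn) (Fin nn) ℝ) (P12 : Matrix (Fin nn) (Fin mm) ℝ)
    (C : Matrix (Fin pp) (Fin nn) ℝ)
    (Msq Swsq : Matrix (Fin nn) (Fin nn) ℝ)
    (Rsq : Matrix (Fin mm) (Fin mm) ℝ) (Svsq : Matrix (Fin pp) (Fin pp) ℝ)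
    (μ : Fin nn → ℝ) (Q : Matrix (Fin mm) (Fin pp) ℝ) : ℝ :=
  frobSq (Msq * (1 + P12 * Q * C) * P11 * Swsq)
  + frobSq (Msq * P12 * Q * Svsq)
  + frobSq (Rsq * Q * C * P11 * Swsq)
  + frobSq (Rsq * Q * Svsq)
  + vecSq ((Rsq * Q * C * P11).mulVec μ)
  + vecSq ((Msq * (1 + P12 * Q * C) * P11).mulVec μ)

end

/-- The positive semidefinite square root of a positive semidefinite matrix
(as defined in Mathlib of December 2024, since removed). -/
noncomputable def Matrix.PosSemidef.sqrt {n : Type*} [Fintype n] [DecidableEq n]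
    {A : Matrix n n ℝ} (hA : A.PosSemidef) : Matrix n n ℝ :=
  hA.1.eigenvectorUnitary.1 * diagonal ((↑) ∘ (√·) ∘ hA.1.eigenvalues) *
  (star hA.1.eigenvectorUnitary : Matrix n n ℝ)

/-- The sparsity subspace `Sparse(S)` associated with a binary matrix `S`. -/
def SparseSet {a b : Type*} (S : Matrix a b Bool) : Set (Matrix a b ℝ) :=
  {K | ∀ i j, S i j = false → K i j = 0}


set_option linter.unusedSectionVars false

section AuxSparse


variable {a b : Type*} [Fintype a] [Fintype b] [DecidableEq a] [DecidableEq b]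

lemma aux_neg_mem {S : Matrix a b Bool} {K : Matrix a b ℝ} (hK : K ∈ SparseSet S) :
    -K ∈ SparseSet S := fun i j hij => by
  simp [Matrix.neg_apply, hK i j hij]

lemma aux_add_mem {S : Matrix a b Bool} {K L : Matrix a b ℝ} (hK : K ∈ SparseSet S)
    (hL : L ∈ SparseSet S) : K + L ∈ SparseSet S := fun i j hij => by
  simp [Matrix.add_apply, hK i j hij, hL i j hij]

lemma aux_smul_mem {S : Matrix a b Bool} (t : ℝ) {K : Matrix a b ℝ} (hK : K ∈ SparseSet S) :
    t • K ∈ SparseSet S := fun i j hij => by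
  simp [Matrix.smul_apply, hK i j hij]

lemma aux_sub_mem {S : Matrix a b Bool} {K L : Matrix a b ℝ} (hK : K ∈ SparseSet S)
    (hL : L ∈ SparseSet S) : K - L ∈ SparseSet S := fun i j hij => by
  simp [Matrix.sub_apply, hK i j hij, hL i j hij]

lemma aux_sum_mem {ι : Type*} {S : Matrix a b Bool} (s : Finset ι)
    (f : ι → Matrix a b ℝ) (h : ∀ x ∈ s, f x ∈ SparseSet S) :
    ∑ x ∈ s, f x ∈ SparseSet S := by
  intro i j hij
  rw [Matrix.sum_apply]
  exact Finset.sum_eq_zero fun x hx => h x hx i j hij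

lemma aux_strongQI {S : Matrix a b Bool} {G : Matrix b a ℝ}
    (hQI : ∀ K ∈ SparseSet S, K * G * K ∈ SparseSet S) :
    ∀ K1 ∈ SparseSet S, ∀ K2 ∈ SparseSet S, K1 * G * K2 ∈ SparseSet S := by
  have key : ∀ i j k l, S i j = false → S i k = true → S l j = true → G k l = 0 := by
    intro i j k l hij hik hlj
    have hkj : k ≠ j := by rintro rfl; rw [hik] at hij; exact Bool.noConfusion hij
    have hli : l ≠ i := by rintro rfl; rw [hlj] at hij; exact Bool.noConfusion hij
    set K : Matrix a b ℝ := fun x y =>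
      (if x = i ∧ y = k then (1:ℝ) else 0) + (if x = l ∧ y = j then (1:ℝ) else 0) with hK
    have hKS : K ∈ SparseSet S := by
      intro x y hxy
      have h1 : ¬(x = i ∧ y = k) := by rintro ⟨rfl, rfl⟩; rw [hik] at hxy; exact Bool.noConfusion hxy
      have h2 : ¬(x = l ∧ y = j) := by rintro ⟨rfl, rfl⟩; rw [hlj] at hxy; exact Bool.noConfusion hxy
      simp [hK, h1, h2]
    have h0 := hQI K hKS i j hij
    have hKi : ∀ x, K i x = if x = k then 1 else 0 := by
      intro x; simp [hK, Ne.symm hli]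
    have hKj : ∀ y, K y j = if y = l then 1 else 0 := by
      intro y; simp [hK, Ne.symm hkj]
    have hcomp : (K * G * K) i j = G k l := by
      simp [Matrix.mul_apply, hKi, hKj, ite_mul, mul_ite, one_mul, zero_mul, mul_one, mul_zero]
    exact hcomp.symm.trans h0
  intro K1 h1 K2 h2 i j hij
  have : (K1 * G * K2) i j = ∑ y, ∑ x, K1 i x * G x y * K2 y j := by
    simp [Matrix.mul_apply, Finset.sum_mul]
  rw [this]
  refine Finset.sum_eq_zero fun y _ => Finset.sum_eq_zero fun x _ => ?_
  cases hx : S i x with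
  | false => rw [h1 i x hx, zero_mul, zero_mul]
  | true =>
    cases hy : S y j with
    | false => rw [h2 y j hy, mul_zero]
    | true => rw [key i j x y hij hx hy, mul_zero, zero_mul]


section AuxPow


variable {a b : Type*} [Fintype a] [Fintype b] [DecidableEq a] [DecidableEq b]

lemma aux_shift_pow (X : Matrix a b ℝ) (Y : Matrix b a ℝ) :
    ∀ r : ℕ, X * (Y * X) ^ r = (X * Y) ^ r * X := by
  intro r
  induction r with
  | zero => simp
  | succ r ih =>
    rw [pow_succ, pow_succ, ← Matrix.mul_assoc, ih, Matrix.mul_assoc, Matrix.mul_assoc,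
      Matrix.mul_assoc]

lemma aux_inv_one_sub {X : Matrix a a ℝ} {r : ℕ} (h : X ^ r = 0) :
    (1 - X)⁻¹ = ∑ i ∈ Finset.range r, X ^ i := by
  apply Matrix.inv_eq_right_inv
  have h2 := mul_geom_sum X r
  rw [show (1 : Matrix a a ℝ) - X = -(X - 1) from (neg_sub X 1).symm, neg_mul, h2, h, zero_sub,
    neg_neg]

lemma aux_isUnit_one_sub {X : Matrix a a ℝ} {r : ℕ} (h : X ^ r = 0) :
    IsUnit (1 - X) := IsNilpotent.isUnit_one_sub ⟨r, h⟩

-- from (K*G)^r = 0 deduce (G*K)^(r+1) = 0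
lemma aux_swap_nilp {K : Matrix a b ℝ} {G : Matrix b a ℝ} {r : ℕ} (h : (K * G) ^ r = 0) :
    (G * K) ^ (r + 1) = 0 := by
  rw [pow_succ, ← Matrix.mul_assoc, ← aux_shift_pow G K r, h]
  simp


section AuxId


variable {a b : Type*} [Fintype a] [Fintype b] [DecidableEq a] [DecidableEq b]
variable {S : Matrix a b Bool} {G : Matrix b a ℝ}

lemma aux_pow_mul_mem
    (hsQI : ∀ K1 ∈ SparseSet S, ∀ K2 ∈ SparseSet S, K1 * G * K2 ∈ SparseSet S)
    {K : Matrix a b ℝ} (hK : K ∈ SparseSet S) : ∀ i : ℕ, (K * G) ^ i * K ∈ SparseSet S := by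
  intro i
  induction i with
  | zero => simpa using hK
  | succ i ih =>
    rw [pow_succ', Matrix.mul_assoc]
    exact hsQI K hK _ ih

lemma aux_Qm_mem
    (hsQI : ∀ K1 ∈ SparseSet S, ∀ K2 ∈ SparseSet S, K1 * G * K2 ∈ SparseSet S)
    {K : Matrix a b ℝ} (hK : K ∈ SparseSet S) {r : ℕ} (hr : (K * G) ^ r = 0) :
    K * (1 - G * K)⁻¹ ∈ SparseSet S := by
  rw [aux_inv_one_sub (aux_swap_nilp hr), Matrix.mul_sum]
  refine aux_sum_mem _ _ fun i _ => ?_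
  rw [aux_shift_pow K G i]
  exact aux_pow_mul_mem hsQI hK i

lemma aux_Q_fixed {K : Matrix a b ℝ} (hU : IsUnit (1 - G * K)) :
    K + K * G * (K * (1 - G * K)⁻¹) = K * (1 - G * K)⁻¹ := by
  have hdet := (Matrix.isUnit_iff_isUnit_det _).mp hU
  have h1 : (1 - G * K) * (1 - G * K)⁻¹ = 1 := Matrix.mul_nonsing_inv _ hdet
  have h2 : K * ((1 - G * K) * (1 - G * K)⁻¹) = K := by rw [h1, Matrix.mul_one]
  calc K + K * G * (K * (1 - G * K)⁻¹)
      = K * ((1 - G * K) * (1 - G * K)⁻¹) + K * G * (K * (1 - G * K)⁻¹) := by rw [h2]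
    _ = (K * (1 - G * K) + K * (G * K)) * (1 - G * K)⁻¹ := by
        simp only [Matrix.add_mul, Matrix.mul_assoc]
    _ = K * (1 - G * K)⁻¹ := by rw [Matrix.mul_sub, Matrix.mul_one, sub_add_cancel]

lemma aux_one_sub_G_Xi {Q : Matrix a b ℝ} (hU : IsUnit (1 + G * Q)) :
    1 - G * (Q * (1 + G * Q)⁻¹) = (1 + G * Q)⁻¹ := by
  have hdet := (Matrix.isUnit_iff_isUnit_det _).mp hU
  have h1 : (1 + G * Q) * (1 + G * Q)⁻¹ = 1 := Matrix.mul_nonsing_inv _ hdet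
  calc 1 - G * (Q * (1 + G * Q)⁻¹)
      = (1 + G * Q) * (1 + G * Q)⁻¹ - G * Q * (1 + G * Q)⁻¹ := by
        rw [h1, Matrix.mul_assoc]
    _ = ((1 + G * Q) - G * Q) * (1 + G * Q)⁻¹ := by rw [Matrix.sub_mul]
    _ = (1 + G * Q)⁻¹ := by rw [add_sub_cancel_right, Matrix.one_mul]

lemma aux_Qm_Xi {Q : Matrix a b ℝ} (hU : IsUnit (1 + G * Q)) :
    (Q * (1 + G * Q)⁻¹) * (1 - G * (Q * (1 + G * Q)⁻¹))⁻¹ = Q := by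
  have hdet := (Matrix.isUnit_iff_isUnit_det _).mp hU
  rw [aux_one_sub_G_Xi hU, Matrix.nonsing_inv_nonsing_inv _ hdet]
  exact Matrix.nonsing_inv_mul_cancel_right _ _ hdet

lemma aux_Xi_Qm {K : Matrix a b ℝ} (hU : IsUnit (1 - G * K)) :
    (K * (1 - G * K)⁻¹) * (1 + G * (K * (1 - G * K)⁻¹))⁻¹ = K := by
  have hdet := (Matrix.isUnit_iff_isUnit_det _).mp hU
  have h1 : 1 + G * (K * (1 - G * K)⁻¹) = (1 - G * K)⁻¹ := by
    calc 1 + G * (K * (1 - G * K)⁻¹)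
        = ((1 - G * K) + G * K) * (1 - G * K)⁻¹ := by
          rw [Matrix.add_mul, Matrix.mul_nonsing_inv _ hdet, Matrix.mul_assoc]
      _ = (1 - G * K)⁻¹ := by rw [sub_add_cancel, Matrix.one_mul]
  rw [h1, Matrix.nonsing_inv_nonsing_inv _ hdet]
  exact Matrix.nonsing_inv_mul_cancel_right _ _ hdet

lemma aux_Xi_mem
    (hsQI : ∀ K1 ∈ SparseSet S, ∀ K2 ∈ SparseSet S, K1 * G * K2 ∈ SparseSet S)
    (hnilp : ∀ K ∈ SparseSet S, IsNilpotent (K * G))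
    {Q : Matrix a b ℝ} (hQ : Q ∈ SparseSet S) : Q * (1 + G * Q)⁻¹ ∈ SparseSet S := by
  have hnegQ : -Q ∈ SparseSet S := aux_neg_mem hQ
  obtain ⟨r, hr⟩ := hnilp _ hnegQ
  have h1 : (1 : Matrix b b ℝ) + G * Q = 1 - G * (-Q) := by
    rw [Matrix.mul_neg, sub_neg_eq_add]
  have h2 : Q * (1 + G * Q)⁻¹ = -((-Q) * (1 - G * (-Q))⁻¹) := by
    rw [← h1, Matrix.neg_mul, neg_neg]
  rw [h2]
  exact aux_neg_mem (aux_Qm_mem hsQI hnegQ hr)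


end AuxId
end AuxPow
end AuxSparse

noncomputable section AuxQuad

def mip {a b : Type*} [Fintype a] [Fintype b] (A B : Matrix a b ℝ) : ℝ :=
  ∑ i, ∑ j, A i j * B i j

def vip {a : Type*} [Fintype a] (v w : a → ℝ) : ℝ := ∑ i, v i * w i

lemma frobSq_nonneg {a b : Type*} [Fintype a] [Fintype b] (A : Matrix a b ℝ) :
    0 ≤ frobSq A :=
  Finset.sum_nonneg fun _ _ => Finset.sum_nonneg fun _ _ => sq_nonneg _

lemma vecSq_nonneg {a : Type*} [Fintype a] (v : a → ℝ) : 0 ≤ vecSq v :=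
  Finset.sum_nonneg fun _ _ => sq_nonneg _

lemma frobSq_add_smul {a b : Type*} [Fintype a] [Fintype b] (A B : Matrix a b ℝ) (t : ℝ) :
    frobSq (A + t • B) = frobSq A + 2 * mip A B * t + frobSq B * t ^ 2 := by
  simp only [frobSq, mip, Matrix.add_apply, Matrix.smul_apply, smul_eq_mul]
  have h : ∀ (x y : ℝ), (x + t * y) ^ 2 = x ^ 2 + 2 * (x * y) * t + y ^ 2 * t ^ 2 := by
    intros; ring
  simp_rw [h, Finset.sum_add_distrib, ← Finset.sum_mul, ← Finset.mul_sum]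

lemma vecSq_add_smul {a : Type*} [Fintype a] (v w : a → ℝ) (t : ℝ) :
    vecSq (v + t • w) = vecSq v + 2 * vip v w * t + vecSq w * t ^ 2 := by
  simp only [vecSq, vip, Pi.add_apply, Pi.smul_apply, smul_eq_mul]
  have h : ∀ (x y : ℝ), (x + t * y) ^ 2 = x ^ 2 + 2 * (x * y) * t + y ^ 2 * t ^ 2 := by
    intros; ring
  simp_rw [h, Finset.sum_add_distrib, ← Finset.sum_mul, ← Finset.mul_sum]

lemma aux_Jtilde_line {nn mm pp : ℕ}
    (P11 : Matrix (Fin nn) (Fin nn) ℝ) (P12 : Matrix (Fin nn) (Fin mm) ℝ)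
    (C : Matrix (Fin pp) (Fin nn) ℝ)
    (Msq Swsq : Matrix (Fin nn) (Fin nn) ℝ)
    (Rsq : Matrix (Fin mm) (Fin mm) ℝ) (Svsq : Matrix (Fin pp) (Fin pp) ℝ)
    (μ : Fin nn → ℝ) (Q0 E : Matrix (Fin mm) (Fin pp) ℝ) :
    ∃ bb cc : ℝ, 0 ≤ cc ∧ ∀ t : ℝ,
      Jtilde P11 P12 C Msq Swsq Rsq Svsq μ (Q0 + t • E)
        = Jtilde P11 P12 C Msq Swsq Rsq Svsq μ Q0 + bb * t + cc * t ^ 2 := by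
  have e1 : ∀ t : ℝ, Msq * (1 + P12 * (Q0 + t • E) * C) * P11 * Swsq
      = Msq * (1 + P12 * Q0 * C) * P11 * Swsq + t • (Msq * (P12 * E * C) * P11 * Swsq) := by
    intro t
    simp only [Matrix.mul_add, Matrix.add_mul, Matrix.smul_mul, Matrix.mul_smul,
      Matrix.mul_one, Matrix.one_mul, Matrix.mul_assoc, smul_add]
    abel
  have e2 : ∀ t : ℝ, Msq * P12 * (Q0 + t • E) * Svsq
      = Msq * P12 * Q0 * Svsq + t • (Msq * P12 * E * Svsq) := by
    intro t
    simp only [Matrix.mul_add, Matrix.add_mul, Matrix.smul_mul, Matrix.mul_smul,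
      Matrix.mul_assoc]
  have e3 : ∀ t : ℝ, Rsq * (Q0 + t • E) * C * P11 * Swsq
      = Rsq * Q0 * C * P11 * Swsq + t • (Rsq * E * C * P11 * Swsq) := by
    intro t
    simp only [Matrix.mul_add, Matrix.add_mul, Matrix.smul_mul, Matrix.mul_smul,
      Matrix.mul_assoc]
  have e4 : ∀ t : ℝ, Rsq * (Q0 + t • E) * Svsq
      = Rsq * Q0 * Svsq + t • (Rsq * E * Svsq) := by
    intro t
    simp only [Matrix.mul_add, Matrix.add_mul, Matrix.smul_mul, Matrix.mul_smul,
      Matrix.mul_assoc]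
  have e5 : ∀ t : ℝ, (Rsq * (Q0 + t • E) * C * P11).mulVec μ
      = (Rsq * Q0 * C * P11).mulVec μ + t • ((Rsq * E * C * P11).mulVec μ) := by
    intro t
    have := e3 t
    have e3' : Rsq * (Q0 + t • E) * C * P11
        = Rsq * Q0 * C * P11 + t • (Rsq * E * C * P11) := by
      simp only [Matrix.mul_add, Matrix.add_mul, Matrix.smul_mul, Matrix.mul_smul,
        Matrix.mul_assoc]
    rw [e3', Matrix.add_mulVec, Matrix.smul_mulVec]
  have e6 : ∀ t : ℝ, (Msq * (1 + P12 * (Q0 + t • E) * C) * P11).mulVec μ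
      = (Msq * (1 + P12 * Q0 * C) * P11).mulVec μ
        + t • ((Msq * (P12 * E * C) * P11).mulVec μ) := by
    intro t
    have e6' : Msq * (1 + P12 * (Q0 + t • E) * C) * P11
        = Msq * (1 + P12 * Q0 * C) * P11 + t • (Msq * (P12 * E * C) * P11) := by
      simp only [Matrix.mul_add, Matrix.add_mul, Matrix.smul_mul, Matrix.mul_smul,
        Matrix.mul_one, Matrix.one_mul, Matrix.mul_assoc, smul_add]
      abel
    rw [e6', Matrix.add_mulVec, Matrix.smul_mulVec]
  refine ⟨2 * mip (Msq * (1 + P12 * Q0 * C) * P11 * Swsq) (Msq * (P12 * E * C) * P11 * Swsq)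
      + 2 * mip (Msq * P12 * Q0 * Svsq) (Msq * P12 * E * Svsq)
      + 2 * mip (Rsq * Q0 * C * P11 * Swsq) (Rsq * E * C * P11 * Swsq)
      + 2 * mip (Rsq * Q0 * Svsq) (Rsq * E * Svsq)
      + 2 * vip ((Rsq * Q0 * C * P11).mulVec μ) ((Rsq * E * C * P11).mulVec μ)
      + 2 * vip ((Msq * (1 + P12 * Q0 * C) * P11).mulVec μ)
          ((Msq * (P12 * E * C) * P11).mulVec μ),
    frobSq (Msq * (P12 * E * C) * P11 * Swsq) + frobSq (Msq * P12 * E * Svsq)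
      + frobSq (Rsq * E * C * P11 * Swsq) + frobSq (Rsq * E * Svsq)
      + vecSq ((Rsq * E * C * P11).mulVec μ) + vecSq ((Msq * (P12 * E * C) * P11).mulVec μ),
    ?_, ?_⟩
  · have h1 := frobSq_nonneg (Msq * (P12 * E * C) * P11 * Swsq)
    have h2 := frobSq_nonneg (Msq * P12 * E * Svsq)
    have h3 := frobSq_nonneg (Rsq * E * C * P11 * Swsq)
    have h4 := frobSq_nonneg (Rsq * E * Svsq)
    have h5 := vecSq_nonneg ((Rsq * E * C * P11).mulVec μ)
    have h6 := vecSq_nonneg ((Msq * (P12 * E * C) * P11).mulVec μ)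
    linarith
  · intro t
    simp only [Jtilde]
    rw [e1 t, e2 t, e3 t, e4 t, e5 t, e6 t, frobSq_add_smul, frobSq_add_smul, frobSq_add_smul,
      frobSq_add_smul, vecSq_add_smul, vecSq_add_smul]
    ring

end AuxQuad

section AuxJc

lemma aux_inv_PKC {u v w : Type*} [Fintype u] [Fintype v] [Fintype w]
    [DecidableEq u] [DecidableEq v] [DecidableEq w]
    (K : Matrix u v ℝ) (C : Matrix v w ℝ) (P12 : Matrix w u ℝ)
    (hU : IsUnit (1 - C * P12 * K)) :
    (1 - P12 * K * C)⁻¹ = 1 + P12 * (K * (1 - C * P12 * K)⁻¹) * C := by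
  apply Matrix.inv_eq_right_inv
  set Q := K * (1 - C * P12 * K)⁻¹ with hQdef
  have hfix : K + K * (C * P12) * Q = Q := aux_Q_fixed (by rwa [Matrix.mul_assoc] at hU ⊢)
  have expand : (1 - P12 * K * C) * (1 + P12 * Q * C)
      = 1 + P12 * Q * C - P12 * K * C - P12 * K * C * (P12 * Q * C) := by noncomm_ring
  have key : P12 * K * C * (P12 * Q * C) = P12 * (K * (C * P12) * Q) * C := by
    simp only [Matrix.mul_assoc]
  have hsum : P12 * K * C + P12 * (K * (C * P12) * Q) * C = P12 * Q * C := by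
    rw [← Matrix.add_mul, ← Matrix.mul_add, hfix]
  rw [expand, key, ← hsum]
  abel

lemma aux_nilp_PKC {u v w : Type*} [Fintype u] [Fintype v] [Fintype w]
    [DecidableEq u] [DecidableEq v] [DecidableEq w]
    (P12 : Matrix w u ℝ) (K : Matrix u v ℝ) (C : Matrix v w ℝ) {r : ℕ}
    (hr : (K * (C * P12)) ^ r = 0) : (P12 * K * C) ^ (r + 1) = 0 := by
  have h1 : ((K * C) * P12) ^ r = 0 := by rw [Matrix.mul_assoc]; exact hr
  have h2 := aux_swap_nilp h1
  rwa [← Matrix.mul_assoc] at h2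

lemma aux_Jcost_eq_Jtilde {nn mm pp : ℕ}
    (P11 : Matrix (Fin nn) (Fin nn) ℝ) (P12 : Matrix (Fin nn) (Fin mm) ℝ)
    (C : Matrix (Fin pp) (Fin nn) ℝ)
    (Msq Swsq : Matrix (Fin nn) (Fin nn) ℝ)
    (Rsq : Matrix (Fin mm) (Fin mm) ℝ) (Svsq : Matrix (Fin pp) (Fin pp) ℝ)
    (μ : Fin nn → ℝ) (K : Matrix (Fin mm) (Fin pp) ℝ)
    (hU : IsUnit (1 - C * P12 * K)) :
    Jcost P11 P12 C Msq Swsq Rsq Svsq μ K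
      = Jtilde P11 P12 C Msq Swsq Rsq Svsq μ (K * (1 - C * P12 * K)⁻¹) := by
  simp only [Jcost, Jtilde]
  rw [aux_inv_PKC K C P12 hU]
  simp only [Matrix.mul_assoc]
  ring

end AuxJc

section AuxAnalysis

attribute [local instance] Matrix.linftyOpNormedAddCommGroup Matrix.linftyOpNormedSpace
  Matrix.linftyOpNormedRing Matrix.linftyOpNormedAlgebra

variable {u v w : Type*} [Fintype u] [Fintype v] [Fintype w]
  [DecidableEq u] [DecidableEq v] [DecidableEq w]
variable {X : Type*} [NormedAddCommGroup X] [NormedSpace ℝ X]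

lemma aux_isBBM_mul :
    IsBoundedBilinearMap ℝ (fun p : Matrix u v ℝ × Matrix v w ℝ => p.1 * p.2) :=
  { add_left := fun x₁ x₂ y => Matrix.add_mul x₁ x₂ y
    smul_left := fun c x y => Matrix.smul_mul c x y
    add_right := fun x y₁ y₂ => Matrix.mul_add x y₁ y₂
    smul_right := fun c x y => Matrix.mul_smul x c y
    bound := ⟨1, one_pos, fun x y => by rw [one_mul]; exact Matrix.linfty_opNorm_mul x y⟩ }

lemma aux_diff_mul {f : X → Matrix u v ℝ} {g : X → Matrix v w ℝ} {x : X}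
    (hf : DifferentiableAt ℝ f x) (hg : DifferentiableAt ℝ g x) :
    DifferentiableAt ℝ (fun y => f y * g y) x := by
  have h := (aux_isBBM_mul (u := u) (v := v) (w := w)).differentiableAt (p := (f x, g x))
  exact h.comp x (hf.prodMk hg)

/-- The entry-evaluation continuous linear map. -/
noncomputable def aux_entryCLM (i : u) (j : v) : Matrix u v ℝ →L[ℝ] ℝ :=
  LinearMap.toContinuousLinearMap
    { toFun := fun A => A i j
      map_add' := fun _ _ => rfl
      map_smul' := fun _ _ => rfl }

lemma aux_diff_entry {f : X → Matrix u v ℝ} {x : X} (hf : DifferentiableAt ℝ f x)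
    (i : u) (j : v) : DifferentiableAt ℝ (fun y => f y i j) x :=
  ((aux_entryCLM i j).differentiableAt).comp x hf

lemma aux_diff_inv {f : X → Matrix u u ℝ} {x : X} (hf : DifferentiableAt ℝ f x)
    (hU : IsUnit (f x)) : DifferentiableAt ℝ (fun y => (f y)⁻¹) x := by
  have h : (fun y => (f y)⁻¹) = fun y => Ring.inverse (f y) := by
    funext y; rw [Matrix.nonsing_inv_eq_ringInverse]
  rw [h]
  exact (differentiableAt_inverse hU).comp x hf

lemma aux_diff_frobSq {f : X → Matrix u v ℝ} {x : X} (hf : DifferentiableAt ℝ f x) :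
    DifferentiableAt ℝ (fun y => frobSq (f y)) x := by
  simp only [frobSq]
  exact DifferentiableAt.fun_sum fun i _ =>
    DifferentiableAt.fun_sum fun j _ => (aux_diff_entry hf i j).pow 2

lemma aux_diff_vecSq_mulVec {f : X → Matrix u v ℝ} (μ : v → ℝ) {x : X}
    (hf : DifferentiableAt ℝ f x) :
    DifferentiableAt ℝ (fun y => vecSq ((f y).mulVec μ)) x := by
  have h : (fun y => vecSq ((f y).mulVec μ)) = fun y => ∑ i, (∑ j, f y i j * μ j) ^ 2 := by
    funext y; simp [vecSq, Matrix.mulVec, dotProduct]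
  rw [h]
  exact DifferentiableAt.fun_sum fun i _ =>
    (DifferentiableAt.fun_sum fun j _ => (aux_diff_entry hf i j).mul_const (μ j)).pow 2

end AuxAnalysis

attribute [local instance] Matrix.linftyOpNormedAddCommGroup Matrix.linftyOpNormedSpace
  Matrix.linftyOpNormedRing Matrix.linftyOpNormedAlgebra

/-- **global optimality of stationary points under QI sparsity.** If `Sparse(S)`
is quadratically invariant with respect to `G = C·P12` and `K·G` is nilpotent on `Sparse(S)`,
then every stationary point `K* ∈ Sparse(S)` of `J` (all directional derivatives along
`Sparse(S)` vanish, i.e. `∇J(K*) ∈ Sparse(S)^⊥`) is a global minimizer of `J` over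
`Sparse(S)`. -/
theorem stationary_implies_global_opt_QI {n m p N : ℕ}
    (hn : 0 < n) (hm : 0 < m) (hp : 0 < p) (hN : 0 < N)
    (P11 : Matrix (Fin (n * (N + 1))) (Fin (n * (N + 1))) ℝ)
    (P12 : Matrix (Fin (n * (N + 1))) (Fin (m * N)) ℝ)
    (C : Matrix (Fin (p * N)) (Fin (n * (N + 1))) ℝ)
    {M W : Matrix (Fin (n * (N + 1))) (Fin (n * (N + 1))) ℝ}
    {R : Matrix (Fin (m * N)) (Fin (m * N)) ℝ}
    {V : Matrix (Fin (p * N)) (Fin (p * N)) ℝ}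
    (hM : M.PosSemidef) (hW : W.PosSemidef) (hR : R.PosDef) (hV : V.PosDef)
    (μ : Fin (n * (N + 1)) → ℝ)
    (G : Matrix (Fin (p * N)) (Fin (m * N)) ℝ) (hG : G = C * P12)
    (S : Matrix (Fin (m * N)) (Fin (p * N)) Bool)
    (hQI : ∀ K ∈ SparseSet S, K * G * K ∈ SparseSet S)
    (hnilp : ∀ K ∈ SparseSet S, IsNilpotent (K * G))
    (Kstar : Matrix (Fin (m * N)) (Fin (p * N)) ℝ) (hKstar : Kstar ∈ SparseSet S)
    (hstat : ∀ D ∈ SparseSet S, deriv (fun t : ℝ =>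
        Jcost P11 P12 C hM.sqrt hW.sqrt hR.posSemidef.sqrt hV.posSemidef.sqrt μ
          (Kstar + t • D)) 0 = 0) :
    ∀ K ∈ SparseSet S,
      Jcost P11 P12 C hM.sqrt hW.sqrt hR.posSemidef.sqrt hV.posSemidef.sqrt μ Kstar ≤
      Jcost P11 P12 C hM.sqrt hW.sqrt hR.posSemidef.sqrt hV.posSemidef.sqrt μ K := by
  intro K hK
  subst hG
  set Msq := hM.sqrt with hMsq
  set Swsq := hW.sqrt with hSwsq
  set Rsq := hR.posSemidef.sqrt with hRsq
  set Svsq := hV.posSemidef.sqrt with hSvsq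
  have hsQI := aux_strongQI hQI
  have hunit : ∀ K' ∈ SparseSet S, IsUnit (1 - C * P12 * K') := by
    intro K' hK'
    obtain ⟨r, hr⟩ := hnilp K' hK'
    exact IsNilpotent.isUnit_one_sub ⟨r + 1, aux_swap_nilp hr⟩
  have hunit' : ∀ Q' ∈ SparseSet S, IsUnit (1 + C * P12 * Q') := by
    intro Q' hQ'
    obtain ⟨r, hr⟩ := hnilp _ (aux_neg_mem hQ')
    have h1 : IsUnit (1 - C * P12 * -Q') := IsNilpotent.isUnit_one_sub ⟨r + 1, aux_swap_nilp hr⟩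
    rwa [Matrix.mul_neg, sub_neg_eq_add] at h1
  have hmemQ : ∀ K' ∈ SparseSet S, K' * (1 - C * P12 * K')⁻¹ ∈ SparseSet S := by
    intro K' hK'
    obtain ⟨r, hr⟩ := hnilp K' hK'
    exact aux_Qm_mem hsQI hK' hr
  set Q0 := Kstar * (1 - C * P12 * Kstar)⁻¹ with hQ0def
  set QK := K * (1 - C * P12 * K)⁻¹ with hQKdef
  have hQ0 : Q0 ∈ SparseSet S := hmemQ _ hKstar
  have hQKS : QK ∈ SparseSet S := hmemQ _ hK
  set E := QK - Q0 with hEdef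
  have hE : E ∈ SparseSet S := aux_sub_mem hQKS hQ0
  obtain ⟨bb, cc, hcc, hquad⟩ := aux_Jtilde_line P11 P12 C Msq Swsq Rsq Svsq μ Q0 E
  set c : ℝ → Matrix (Fin (m * N)) (Fin (p * N)) ℝ :=
    fun t => (Q0 + t • E) * (1 + C * P12 * (Q0 + t • E))⁻¹ with hcdef
  have hlinS : ∀ t : ℝ, Q0 + t • E ∈ SparseSet S := fun t =>
    aux_add_mem hQ0 (aux_smul_mem t hE)
  have hcS : ∀ t : ℝ, c t ∈ SparseSet S := fun t => aux_Xi_mem hsQI hnilp (hlinS t)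
  have hc0 : c 0 = Kstar := by
    rw [hcdef]
    simp only [zero_smul, add_zero]
    rw [hQ0def]
    exact aux_Xi_Qm (hunit _ hKstar)
  have hQmc : ∀ t : ℝ, c t * (1 - C * P12 * c t)⁻¹ = Q0 + t • E := by
    intro t
    rw [hcdef]
    exact aux_Qm_Xi (hunit' _ (hlinS t))
  have hgc : ∀ t : ℝ, Jcost P11 P12 C Msq Swsq Rsq Svsq μ (c t)
      = Jtilde P11 P12 C Msq Swsq Rsq Svsq μ (Q0 + t • E) := by
    intro t
    rw [aux_Jcost_eq_Jtilde P11 P12 C Msq Swsq Rsq Svsq μ (c t) (hunit _ (hcS t)), hQmc t]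
  have hU1 : IsUnit (1 - P12 * Kstar * C) := by
    obtain ⟨r, hr⟩ := hnilp Kstar hKstar
    exact IsNilpotent.isUnit_one_sub ⟨r + 1, aux_nilp_PKC P12 Kstar C hr⟩
  have hU2 : IsUnit (1 - C * P12 * Kstar) := hunit _ hKstar
  have hid : DifferentiableAt ℝ (fun K' : Matrix (Fin (m * N)) (Fin (p * N)) ℝ => K') Kstar :=
    differentiableAt_fun_id
  have hinv1 : DifferentiableAt ℝ
      (fun K' : Matrix (Fin (m * N)) (Fin (p * N)) ℝ => (1 - P12 * K' * C)⁻¹) Kstar := by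
    apply aux_diff_inv
    · exact (differentiableAt_const _).sub
        (aux_diff_mul (aux_diff_mul (differentiableAt_const P12) hid) (differentiableAt_const C))
    · exact hU1
  have hinv2 : DifferentiableAt ℝ
      (fun K' : Matrix (Fin (m * N)) (Fin (p * N)) ℝ => (1 - C * P12 * K')⁻¹) Kstar := by
    apply aux_diff_inv
    · exact (differentiableAt_const _).sub
        (aux_diff_mul (differentiableAt_const (C * P12)) hid)
    · exact hU2
  have hdiffJ : DifferentiableAt ℝ
      (fun K' => Jcost P11 P12 C Msq Swsq Rsq Svsq μ K') Kstar := by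
    simp only [Jcost]
    exact ((((((aux_diff_frobSq (aux_diff_mul (aux_diff_mul (aux_diff_mul
        (differentiableAt_const Msq) hinv1) (differentiableAt_const P11))
        (differentiableAt_const Swsq))).add
      (aux_diff_frobSq (aux_diff_mul (aux_diff_mul (aux_diff_mul
        (differentiableAt_const (Msq * P12)) hid) hinv2) (differentiableAt_const Svsq)))).add
      (aux_diff_frobSq (aux_diff_mul (aux_diff_mul (aux_diff_mul (aux_diff_mul (aux_diff_mul
        (differentiableAt_const Rsq) hid) hinv2) (differentiableAt_const C))
        (differentiableAt_const P11)) (differentiableAt_const Swsq)))).add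
      (aux_diff_frobSq (aux_diff_mul (aux_diff_mul (aux_diff_mul
        (differentiableAt_const Rsq) hid) hinv2) (differentiableAt_const Svsq)))).add
      (aux_diff_vecSq_mulVec μ (aux_diff_mul (aux_diff_mul
        (differentiableAt_const Msq) hinv1) (differentiableAt_const P11)))).add
      (aux_diff_vecSq_mulVec μ (aux_diff_mul (aux_diff_mul (aux_diff_mul (aux_diff_mul
        (differentiableAt_const Rsq) hid) hinv2) (differentiableAt_const C))
        (differentiableAt_const P11))))
  set L := fderiv ℝ (fun K' => Jcost P11 P12 C Msq Swsq Rsq Svsq μ K') Kstar with hLdef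
  have hLK : HasFDerivAt (fun K' => Jcost P11 P12 C Msq Swsq Rsq Svsq μ K') L Kstar :=
    hdiffJ.hasFDerivAt
  have hlind : DifferentiableAt ℝ (fun t : ℝ => Q0 + t • E) 0 :=
    (differentiableAt_const Q0).add (differentiableAt_fun_id.smul_const E)
  have hcd : DifferentiableAt ℝ c 0 := by
    rw [hcdef]
    apply aux_diff_mul hlind
    apply aux_diff_inv
    · exact (differentiableAt_const _).add
        (aux_diff_mul (differentiableAt_const (C * P12)) hlind)
    · simp only [zero_smul, add_zero]
      exact hunit' _ hQ0
  set D := deriv c 0 with hDdef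
  have hcD : HasDerivAt c D 0 := hcd.hasDerivAt
  have hDS : D ∈ SparseSet S := by
    intro i j hij
    have h1 : HasDerivAt (fun t : ℝ => c t i j) (D i j) 0 :=
      (aux_entryCLM i j).hasFDerivAt.comp_hasDerivAt 0 hcD
    have h2 : (fun t : ℝ => c t i j) = fun _ => (0 : ℝ) := funext fun t => hcS t i j hij
    have h3 : HasDerivAt (fun t : ℝ => c t i j) 0 0 := by
      rw [h2]; exact hasDerivAt_const 0 0
    exact h1.unique h3
  have hgc0 : HasFDerivAt (fun K' => Jcost P11 P12 C Msq Swsq Rsq Svsq μ K') L (c 0) := by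
    rw [hc0]; exact hLK
  have hchain1 : HasDerivAt
      (fun t : ℝ => Jcost P11 P12 C Msq Swsq Rsq Svsq μ (c t)) (L D) 0 :=
    hgc0.comp_hasDerivAt 0 hcD
  have hlineD : HasDerivAt (fun t : ℝ => Kstar + t • D) D 0 := by
    have h := ((hasDerivAt_id (0 : ℝ)).smul_const D).const_add Kstar
    simp only [one_smul] at h; exact h
  have hgK0 : HasFDerivAt (fun K' => Jcost P11 P12 C Msq Swsq Rsq Svsq μ K') L
      (Kstar + (0 : ℝ) • D) := by
    simp only [zero_smul, add_zero]; exact hLK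
  have hchain2 : HasDerivAt
      (fun t : ℝ => Jcost P11 P12 C Msq Swsq Rsq Svsq μ (Kstar + t • D)) (L D) 0 :=
    hgK0.comp_hasDerivAt (f := fun t : ℝ => Kstar + t • D) 0 hlineD
  have hLD0 : L D = 0 := by
    have h := hstat D hDS
    rwa [hchain2.deriv] at h
  have hφq : (fun t : ℝ => Jcost P11 P12 C Msq Swsq Rsq Svsq μ (c t))
      = fun t : ℝ => Jtilde P11 P12 C Msq Swsq Rsq Svsq μ Q0 + bb * t + cc * t ^ 2 := by
    funext t; rw [hgc t, hquad t]
  have hderφ : HasDerivAt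
      (fun t : ℝ => Jtilde P11 P12 C Msq Swsq Rsq Svsq μ Q0 + bb * t + cc * t ^ 2) bb 0 := by
    have hA : HasDerivAt (fun t : ℝ => bb * t) bb 0 := by
      simpa using (hasDerivAt_id (0 : ℝ)).const_mul bb
    have hB : HasDerivAt (fun t : ℝ => cc * t ^ 2) 0 0 := by
      simpa using (hasDerivAt_pow 2 (0 : ℝ)).const_mul cc
    have h := (hA.const_add (Jtilde P11 P12 C Msq Swsq Rsq Svsq μ Q0)).add hB
    rw [add_zero] at h; exact h
  have hbb0 : bb = 0 := by
    have h1 : HasDerivAt (fun t : ℝ => Jcost P11 P12 C Msq Swsq Rsq Svsq μ (c t)) bb 0 := by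
      rw [hφq]; exact hderφ
    rw [h1.unique hchain1, hLD0]
  have hKstarJ := aux_Jcost_eq_Jtilde P11 P12 C Msq Swsq Rsq Svsq μ Kstar hU2
  rw [← hQ0def] at hKstarJ
  have hKJ := aux_Jcost_eq_Jtilde P11 P12 C Msq Swsq Rsq Svsq μ K (hunit _ hK)
  rw [← hQKdef] at hKJ
  have hone : Q0 + (1 : ℝ) • E = QK := by
    rw [one_smul, hEdef]; abel
  have h1 := hquad 1
  rw [hone] at h1
  rw [hKstarJ, hKJ, h1, hbb0]
  nlinarith [hcc]
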